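/- Let 𝒩 ∈ ℕ, M ∈ ℕ, δ, ε, η > 0, and let Λ ⊆ [0,1] be an interval. Suppose ℐ : Λ → 𝒮(𝕋¹) assigns to each τ a set consisting of 𝒩 disjoint connected components I¹(τ), …, I^𝒩(τ), each of length ≤ δ, depending differentiably on τ, such that |D_τ(I^ι(τ), I^κ(τ))| ≥ η/2 for all ι ≠ κ, and such that d(I^ι(τ), I^ι(τ) + nω) > ε for all τ ∈ Λ, n ∈ [1,M], ι ∈ [1,𝒩]. Then the set Υ = {τ ∈ Λ : d(ℐ(τ), ⋃_{n=1}^M (ℐ(τ) + nω)) ≤ ε} has Lebesgue measure ≤ 8𝒩²M(δ+ε)/η and consists of at most 2𝒩²M − 1 connected components. -/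

import Mathlib

open MeasureTheory Set

/-- The open arc on 𝕋¹ = ℝ/ℤ which is the projection of the interval (a,b). -/
noncomputable def arc (a b : ℝ) : Set (AddCircle (1 : ℝ)) :=
  (fun x : ℝ => (x : AddCircle (1 : ℝ))) '' Set.Ioo a b

/-- The distance between two subsets of the circle. -/
noncomputable def setDist (A B : Set (AddCircle (1 : ℝ))) : ℝ :=
  sInf {r | ∃ p ∈ A, ∃ q ∈ B, dist p q = r}

lemma coe_eq_coe_iff (s t : ℝ) : (s : AddCircle (1:ℝ)) = t ↔ ∃ k : ℤ, s - t = k := by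
  rw [QuotientAddGroup.eq_iff_sub_mem, AddSubgroup.mem_zmultiples_iff]
  constructor
  · rintro ⟨k, hk⟩; exact ⟨k, by rw [← hk]; simp⟩
  · rintro ⟨k, hk⟩; exact ⟨k, by rw [hk]; simp⟩
lemma dist_coe_eq (s t : ℝ) :
    dist (s : AddCircle (1:ℝ)) (t : AddCircle (1:ℝ)) = |s - t - round (s - t)| := by
  rw [dist_eq_norm]
  have h : (s : AddCircle (1:ℝ)) - t = ((s - t : ℝ) : AddCircle (1:ℝ)) :=
    (QuotientAddGroup.mk_sub _ s t).symm
  rw [h, AddCircle.norm_eq]; norm_num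
lemma dist_coe_le (s t : ℝ) (k : ℤ) :
    dist (s : AddCircle (1:ℝ)) (t : AddCircle (1:ℝ)) ≤ |s - t - k| := by
  rw [dist_coe_eq]; exact round_le _ k
lemma mem_Ioo_mid {x y : ℝ} (h : x < y) : (x + y) / 2 ∈ Set.Ioo x y := ⟨by linarith, by linarith⟩
lemma arc_nonempty {x y : ℝ} (h : x < y) : (arc x y).Nonempty :=
  ⟨_, Set.mem_image_of_mem _ (mem_Ioo_mid h)⟩
def dSet (A B : Set (AddCircle (1:ℝ))) : Set ℝ := {r | ∃ p ∈ A, ∃ q ∈ B, dist p q = r}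
lemma setDist_eq (A B : Set (AddCircle (1:ℝ))) : setDist A B = sInf (dSet A B) := rfl
lemma dSet_nonneg {A B : Set (AddCircle (1:ℝ))} {r : ℝ} (h : r ∈ dSet A B) : 0 ≤ r := by
  obtain ⟨p, _, q, _, rfl⟩ := h; exact dist_nonneg
lemma dSet_bddBelow (A B : Set (AddCircle (1:ℝ))) : BddBelow (dSet A B) :=
  ⟨0, fun _ hr => dSet_nonneg hr⟩
lemma dSet_nonempty {A B : Set (AddCircle (1:ℝ))} (hA : A.Nonempty) (hB : B.Nonempty) :
    (dSet A B).Nonempty := ⟨_, hA.choose, hA.choose_spec, hB.choose, hB.choose_spec, rfl⟩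

lemma exists_diff_mem {x₁ y₁ x₃ y₃ ρ : ℝ} (h₁ : x₁ < y₁) (h₃ : x₃ < y₃)
    (hρ₁ : x₁ - y₃ < ρ) (hρ₂ : ρ < y₁ - x₃) :
    ∃ s ∈ Set.Ioo x₁ y₁, ∃ t ∈ Set.Ioo x₃ y₃, s - t = ρ := by
  have hlt : max x₃ (x₁ - ρ) < min y₃ (y₁ - ρ) := by
    simp only [max_lt_iff, lt_min_iff]
    exact ⟨⟨h₃, by linarith⟩, by linarith, by linarith⟩
  set t := (max x₃ (x₁ - ρ) + min y₃ (y₁ - ρ)) / 2 with htdef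
  have htm := mem_Ioo_mid hlt
  have h1 := le_max_left x₃ (x₁ - ρ)
  have h2 := le_max_right x₃ (x₁ - ρ)
  have h3 := min_le_left y₃ (y₁ - ρ)
  have h4 := min_le_right y₃ (y₁ - ρ)
  refine ⟨t + ρ, ⟨by linarith [htm.1], by linarith [htm.2]⟩,
    t, ⟨by linarith [htm.1], by linarith [htm.2]⟩, by ring⟩

lemma setDist_arc_le_iff {x₁ y₁ x₃ y₃ ε : ℝ} (h₁ : x₁ < y₁) (h₃ : x₃ < y₃) (hε : 0 ≤ ε) :
    setDist (arc x₁ y₁) (arc x₃ y₃) ≤ ε ↔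
      ∃ k : ℤ, x₁ - y₃ - ε ≤ k ∧ (k : ℝ) ≤ y₁ - x₃ + ε := by
  constructor
  · intro hle
    by_contra hno
    push_neg at hno
    set L := x₁ - y₃ - ε with hL
    set R := y₁ - x₃ + ε with hR
    have hLR : L < R := by simp only [hL, hR]; linarith
    set m : ℤ := ⌊L⌋ with hm
    have hmle : (m:ℝ) ≤ L := Int.floor_le L
    have hmL : (m:ℝ) < L := by
      rcases lt_or_eq_of_le hmle with h | h
      · exact h
      · exact absurd (hno m (le_of_eq h.symm)) (by push_neg; linarith)
    have hm1R : R < (m:ℝ) + 1 := by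
      by_contra hc
      push_neg at hc
      have hL1 : L ≤ (m:ℝ) + 1 := le_of_lt (by exact_mod_cast Int.lt_floor_add_one L)
      have := hno (m+1) (by push_cast; linarith)
      push_cast at this; linarith
    set μ := min (L - m) ((m:ℝ) + 1 - R) with hμ
    have hμpos : 0 < μ := lt_min (by linarith) (by linarith)
    have hμ1 : μ ≤ L - m := min_le_left _ _
    have hμ2 : μ ≤ (m:ℝ) + 1 - R := min_le_right _ _
    have hlow : ∀ r ∈ dSet (arc x₁ y₁) (arc x₃ y₃), ε + μ ≤ r := by
      rintro r ⟨p, ⟨s, hs, rfl⟩, q, ⟨t, ht, rfl⟩, rfl⟩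
      by_contra hr
      push_neg at hr
      rw [dist_coe_eq] at hr
      set j := round (s - t) with hj
      have habs := abs_lt.1 hr
      have hj1 : (m:ℝ) < j := by
        have := hs.1; have := ht.2; simp only [hL] at hμ1; push_cast at habs ⊢; linarith
      have hj2 : (j:ℝ) < (m:ℝ) + 1 := by
        have := hs.2; have := ht.1; simp only [hR] at hμ2; push_cast at habs ⊢; linarith
      have : m < j := by exact_mod_cast hj1
      have : j < m + 1 := by exact_mod_cast hj2
      omega
    have : ε + μ ≤ setDist (arc x₁ y₁) (arc x₃ y₃) :=
      le_csInf (dSet_nonempty (arc_nonempty h₁) (arc_nonempty h₃)) hlow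
    linarith
  · rintro ⟨k, hk₁, hk₂⟩
    apply le_of_forall_pos_le_add
    intro γ hγ
    set θ := min γ ((y₁ - x₃ - (x₁ - y₃)) / 2) with hθ
    have hgap : 0 < (y₁ - x₃ - (x₁ - y₃)) / 2 := by linarith
    have hθpos : 0 < θ := lt_min hγ hgap
    have hθγ : θ ≤ γ := min_le_left _ _
    have hθgap : θ ≤ (y₁ - x₃ - (x₁ - y₃)) / 2 := min_le_right _ _
    set ρ := min (max (k:ℝ) (x₁ - y₃ + θ)) (y₁ - x₃ - θ) with hρdef
    have hρ₁ : x₁ - y₃ < ρ := by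
      apply lt_min
      · exact lt_of_lt_of_le (by linarith) (le_max_right _ _)
      · linarith
    have hρ₂ : ρ < y₁ - x₃ := lt_of_le_of_lt (min_le_right _ _) (by linarith)
    have hρk : |ρ - k| ≤ ε + θ := by
      rcases le_total (k:ℝ) (x₁ - y₃ + θ) with hc | hc
      · have hmax : max (k:ℝ) (x₁ - y₃ + θ) = x₁ - y₃ + θ := max_eq_right hc
        have hmin : ρ = min (x₁ - y₃ + θ) (y₁ - x₃ - θ) := by rw [hρdef, hmax]
        have hge : (k:ℝ) ≤ ρ := by
          rw [hmin]; exact le_min hc (by linarith)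
        have hle' : ρ ≤ x₁ - y₃ + θ := by rw [hmin]; exact min_le_left _ _
        rw [abs_le]; constructor <;> linarith
      · have hmax : max (k:ℝ) (x₁ - y₃ + θ) = k := max_eq_left hc
        rcases le_total (k:ℝ) (y₁ - x₃ - θ) with hc2 | hc2
        · have : ρ = k := by rw [hρdef, hmax]; exact min_eq_left hc2
          rw [this]; simp; linarith
        · have : ρ = y₁ - x₃ - θ := by rw [hρdef, hmax]; exact min_eq_right hc2
          rw [abs_le]; constructor <;> linarith
    obtain ⟨s, hs, t, ht, hst⟩ := exists_diff_mem h₁ h₃ hρ₁ hρ₂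
    have hd : dist (s : AddCircle (1:ℝ)) (t : AddCircle (1:ℝ)) ≤ ε + γ := by
      calc dist (s : AddCircle (1:ℝ)) (t : AddCircle (1:ℝ)) ≤ |s - t - k| := dist_coe_le s t k
      _ = |ρ - k| := by rw [hst]
      _ ≤ ε + θ := hρk
      _ ≤ ε + γ := by linarith
    exact le_trans (csInf_le (dSet_bddBelow _ _)
      ⟨(s : AddCircle (1:ℝ)), ⟨s, hs, rfl⟩, (t : AddCircle (1:ℝ)), ⟨t, ht, rfl⟩, rfl⟩) hd

lemma disjoint_arc_no_int {x₁ y₁ x₂ y₂ : ℝ} (h₁ : x₁ < y₁) (h₂ : x₂ < y₂)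
    (hd : Disjoint (arc x₁ y₁) (arc x₂ y₂)) (k : ℤ) :
    ¬(x₁ - y₂ < k ∧ (k:ℝ) < y₁ - x₂) := by
  rintro ⟨hk₁, hk₂⟩
  obtain ⟨s, hs, t, ht, hst⟩ := exists_diff_mem h₁ h₂ hk₁ hk₂
  refine Set.disjoint_left.1 hd ⟨s, hs, rfl⟩ ?_
  have hco : (s : AddCircle (1:ℝ)) = (t : AddCircle (1:ℝ)) :=
    (coe_eq_coe_iff s t).2 ⟨k, by linarith⟩
  show (s : AddCircle (1:ℝ)) ∈ arc x₂ y₂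
  rw [hco]; exact ⟨t, ht, rfl⟩

lemma image_translate_arc (x y e : ℝ) :
    (fun p => p + ((e : ℝ) : AddCircle (1:ℝ))) '' arc x y = arc (x + e) (y + e) := by
  unfold arc
  rw [Set.image_image, ← Set.image_add_const_Ioo e x y, Set.image_image]
  apply Set.image_congr'
  intro t
  exact (QuotientAddGroup.mk_add _ t e).symm

lemma setDist_le_dist {A B : Set (AddCircle (1:ℝ))} {p q : AddCircle (1:ℝ)}
    (hp : p ∈ A) (hq : q ∈ B) : setDist A B ≤ dist p q :=
  csInf_le (dSet_bddBelow _ _) ⟨p, hp, q, hq, rfl⟩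

lemma setDist_le_half {A B : Set (AddCircle (1:ℝ))} (hA : A.Nonempty) (hB : B.Nonempty) :
    setDist A B ≤ 1/2 := by
  obtain ⟨p, hp⟩ := hA; obtain ⟨q, hq⟩ := hB
  refine (setDist_le_dist hp hq).trans ?_
  rw [dist_eq_norm]
  have := AddCircle.norm_le_half_period (p := (1:ℝ)) (x := p - q) one_ne_zero
  simpa using this

lemma setDist_biUnion_le_iff {α β : Type*} [DecidableEq α] [DecidableEq β]
    {S : Finset α} {T : Finset β}
    (hS : S.Nonempty) (hT : T.Nonempty)
    (A : α → Set (AddCircle (1:ℝ))) (B : β → Set (AddCircle (1:ℝ)))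
    (hA : ∀ i ∈ S, (A i).Nonempty) (hB : ∀ j ∈ T, (B j).Nonempty) (ε : ℝ) :
    setDist (⋃ i ∈ S, A i) (⋃ j ∈ T, B j) ≤ ε ↔
      ∃ i ∈ S, ∃ j ∈ T, setDist (A i) (B j) ≤ ε := by
  have hsub : ∀ i ∈ S, ∀ j ∈ T, dSet (A i) (B j) ⊆ dSet (⋃ i ∈ S, A i) (⋃ j ∈ T, B j) := by
    rintro i hi j hj r ⟨p, hp, q, hq, rfl⟩
    exact ⟨p, Set.mem_biUnion hi hp, q, Set.mem_biUnion hj hq, rfl⟩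
  constructor
  · intro h
    by_contra hno
    push_neg at hno
    obtain ⟨i₀, hi₀⟩ := hS; obtain ⟨j₀, hj₀⟩ := hT
    set P := (S ×ˢ T).image (fun p => setDist (A p.1) (B p.2)) with hP
    have hPne : P.Nonempty := ⟨_, Finset.mem_image.2 ⟨(i₀, j₀), Finset.mem_product.2 ⟨hi₀, hj₀⟩, rfl⟩⟩
    set m := P.min' hPne with hmdef
    have hεm : ε < m := by
      rw [Finset.lt_min'_iff]
      intro y hy
      obtain ⟨⟨i, j⟩, hij, rfl⟩ := Finset.mem_image.1 hy
      obtain ⟨hi, hj⟩ := Finset.mem_product.1 hij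
      exact hno i hi j hj
    have hlow : ∀ r ∈ dSet (⋃ i ∈ S, A i) (⋃ j ∈ T, B j), m ≤ r := by
      rintro r ⟨p, hp, q, hq, rfl⟩
      obtain ⟨i, hi, hpi⟩ := Set.mem_iUnion₂.1 hp
      obtain ⟨j, hj, hqj⟩ := Set.mem_iUnion₂.1 hq
      refine (P.min'_le _ (Finset.mem_image.2 ⟨(i, j), Finset.mem_product.2 ⟨hi, hj⟩, rfl⟩)).trans ?_
      exact setDist_le_dist hpi hqj
    have hne : (dSet (⋃ i ∈ S, A i) (⋃ j ∈ T, B j)).Nonempty := by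
      obtain ⟨p, hp⟩ := hA i₀ hi₀
      obtain ⟨q, hq⟩ := hB j₀ hj₀
      exact ⟨_, p, Set.mem_biUnion hi₀ hp, q, Set.mem_biUnion hj₀ hq, rfl⟩
    have := le_csInf hne hlow
    rw [setDist_eq] at h
    linarith
  · rintro ⟨i, hi, j, hj, hle⟩
    refine le_trans ?_ hle
    rw [setDist_eq, setDist_eq]
    exact csInf_le_csInf (dSet_bddBelow _ _) (dSet_nonempty (hA i hi) (hB j hj)) (hsub i hi j hj)

lemma window_lemma {u v : ℝ → ℝ} {Λ : Set ℝ} (hΛ : Λ.OrdConnected)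
    (hu : Continuous u) (hv : Continuous v)
    (huv : ∀ τ ∈ Λ, u τ < v τ)
    (hni : ∀ τ ∈ Λ, ∀ j : ℤ, ¬(u τ < j ∧ (j:ℝ) < v τ))
    {τ₀ : ℝ} (hτ₀ : τ₀ ∈ Λ) :
    ∃ m : ℤ, ∀ τ ∈ Λ, (m:ℝ) ≤ u τ ∧ v τ ≤ (m:ℝ) + 1 := by
  have key : ∀ τ₁ ∈ Λ, ∀ τ₂ ∈ Λ, ∀ j : ℤ, v τ₁ ≤ j → (j:ℝ) ≤ u τ₂ → False := by
    intro τ₁ h₁ τ₂ h₂ j hj₁ hj₂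
    have hne : τ₁ ≠ τ₂ := by
      intro h; rw [h] at hj₁; linarith [huv τ₂ h₂]
    set f : ℝ → ℝ := fun τ => u τ + v τ - 2 * (j:ℝ) with hf
    have hfc : Continuous f := by fun_prop
    have hf₁ : f τ₁ < 0 := by simp only [hf]; have := huv τ₁ h₁; linarith
    have hf₂ : 0 < f τ₂ := by simp only [hf]; have := huv τ₂ h₂; linarith
    have hcontr : ∀ τ ∈ Λ, f τ = 0 → False := by
      intro τ hτ h0
      have huvτ := huv τ hτ
      refine hni τ hτ j ⟨?_, ?_⟩ <;> simp only [hf] at h0 <;> linarith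
    rcases lt_or_gt_of_ne hne with hlt | hlt
    · obtain ⟨τ, hτ, hfτ⟩ := intermediate_value_Icc hlt.le hfc.continuousOn
        (Set.mem_Icc.2 ⟨hf₁.le, hf₂.le⟩)
      exact hcontr τ (hΛ.out h₁ h₂ hτ) hfτ
    · obtain ⟨τ, hτ, hfτ⟩ := intermediate_value_Icc' hlt.le hfc.continuousOn
        (Set.mem_Icc.2 ⟨hf₁.le, hf₂.le⟩)
      exact hcontr τ (hΛ.out h₂ h₁ hτ) hfτ
  have hpt : ∀ τ ∈ Λ, ((⌈v τ⌉ - 1 : ℤ) : ℝ) ≤ u τ ∧ v τ ≤ ((⌈v τ⌉ - 1 : ℤ) : ℝ) + 1 := by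
    intro τ hτ
    constructor
    · by_contra hc
      push_neg at hc
      refine hni τ hτ (⌈v τ⌉ - 1) ⟨hc, ?_⟩
      push_cast
      linarith [Int.ceil_lt_add_one (v τ)]
    · push_cast
      linarith [Int.le_ceil (v τ)]
  refine ⟨⌈v τ₀⌉ - 1, ?_⟩
  intro τ hτ
  set m₀ : ℤ := ⌈v τ₀⌉ - 1 with hm₀
  set mτ : ℤ := ⌈v τ⌉ - 1 with hmτ
  obtain ⟨hu₀, hv₀⟩ := hpt τ₀ hτ₀
  obtain ⟨huτ, hvτ⟩ := hpt τ hτ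
  rcases lt_trichotomy m₀ mτ with hc | hc | hc
  · exfalso
    refine key τ₀ hτ₀ τ hτ (m₀ + 1) (by push_cast; linarith) ?_
    have : ((m₀ + 1 : ℤ) : ℝ) ≤ (mτ : ℝ) := by exact_mod_cast hc
    linarith
  · rw [show m₀ = mτ from hc]; exact ⟨huτ, hvτ⟩
  · exfalso
    refine key τ hτ τ₀ hτ₀ (mτ + 1) (by push_cast; linarith) ?_
    have : ((mτ + 1 : ℤ) : ℝ) ≤ (m₀ : ℝ) := by exact_mod_cast hc
    linarith

lemma sign_propagate {g : ℝ → ℝ} {Λ : Set ℝ} {η : ℝ} (hΛ : Λ.OrdConnected)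
    (hg : Differentiable ℝ g)
    (hsp : ∀ τ ∈ Λ, η / 2 ≤ deriv g τ ∨ deriv g τ ≤ -(η / 2))
    (hη : 0 < η) {τ₀ : ℝ} (hτ₀ : τ₀ ∈ Λ) (hpos : η / 2 ≤ deriv g τ₀) :
    ∀ τ ∈ Λ, η / 2 ≤ deriv g τ := by
  intro τ hτ
  rcases hsp τ hτ with h | h
  · exact h
  exfalso
  have himg : Set.OrdConnected (deriv g '' Λ) :=
    hΛ.image_deriv (fun x _ => (hg x))
  have h0 : (0:ℝ) ∈ deriv g '' Λ :=
    himg.out (Set.mem_image_of_mem _ hτ) (Set.mem_image_of_mem _ hτ₀)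
      ⟨by linarith, by linarith⟩
  obtain ⟨ξ, hξ, hξ0⟩ := h0
  rcases hsp ξ hξ with h' | h' <;> rw [hξ0] at h' <;> linarith

lemma slope_ge {g : ℝ → ℝ} {Λ : Set ℝ} {c : ℝ} (hΛ : Λ.OrdConnected)
    (hg : Differentiable ℝ g)
    (hd : ∀ τ ∈ Λ, c ≤ deriv g τ) {τ₁ τ₂ : ℝ} (h₁ : τ₁ ∈ Λ) (h₂ : τ₂ ∈ Λ)
    (hle : τ₁ ≤ τ₂) : c * (τ₂ - τ₁) ≤ g τ₂ - g τ₁ := by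
  rcases eq_or_lt_of_le hle with rfl | hlt
  · simp
  obtain ⟨ξ, hξ, hslope⟩ := exists_deriv_eq_slope g hlt hg.continuous.continuousOn
    (fun x _ => (hg x).differentiableWithinAt)
  have hξΛ : ξ ∈ Λ := hΛ.out h₁ h₂ (Set.Ioo_subset_Icc_self hξ)
  have hcd := hd ξ hξΛ
  rw [hslope] at hcd
  have h0 : 0 < τ₂ - τ₁ := by linarith
  nlinarith [div_mul_cancel₀ (g τ₂ - g τ₁) h0.ne']

lemma slope_le {g : ℝ → ℝ} {Λ : Set ℝ} {c : ℝ} (hΛ : Λ.OrdConnected)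
    (hg : Differentiable ℝ g)
    (hd : ∀ τ ∈ Λ, deriv g τ ≤ c) {τ₁ τ₂ : ℝ} (h₁ : τ₁ ∈ Λ) (h₂ : τ₂ ∈ Λ)
    (hle : τ₁ ≤ τ₂) : g τ₂ - g τ₁ ≤ c * (τ₂ - τ₁) := by
  rcases eq_or_lt_of_le hle with rfl | hlt
  · simp
  obtain ⟨ξ, hξ, hslope⟩ := exists_deriv_eq_slope g hlt hg.continuous.continuousOn
    (fun x _ => (hg x).differentiableWithinAt)
  have hξΛ : ξ ∈ Λ := hΛ.out h₁ h₂ (Set.Ioo_subset_Icc_self hξ)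
  have hcd := hd ξ hξΛ
  rw [hslope] at hcd
  have h0 : 0 < τ₂ - τ₁ := by linarith
  nlinarith [div_mul_cancel₀ (g τ₂ - g τ₁) h0.ne']


set_option maxHeartbeats 1000000 in
/-- Lemma 4.4 of the paper: if ℐ(τ) consists of 𝒩 disjoint
intervals of length ≤ δ, any two distinct components move relative to each
other with speed ≥ η/2, and each component stays ε-away from its own first M
translates by ω, then the set Υ of parameters τ ∈ Λ at which ℐ(τ) comes
ε-close to one of its first M translates has measure ≤ 8𝒩²M(δ+ε)/η and
consists of at most 2𝒩²M - 1 connected components. -/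
theorem parameter_exclusion_basic
    (𝒩 M : ℕ) (h𝒩 : 1 ≤ 𝒩) (hM : 1 ≤ M)
    (δ ε η : ℝ) (hδ : 0 < δ) (hε : 0 < ε) (hη : 0 < η)
    (ω : AddCircle (1 : ℝ))
    (Λ : Set ℝ) (hΛ : Λ.OrdConnected) (hΛ01 : Λ ⊆ Set.Icc (0:ℝ) 1)
    (a b : Fin 𝒩 → ℝ → ℝ)
    (haD : ∀ ι, Differentiable ℝ (a ι)) (hbD : ∀ ι, Differentiable ℝ (b ι))
    (hlen : ∀ ι, ∀ τ ∈ Λ, 0 < b ι τ - a ι τ ∧ b ι τ - a ι τ ≤ δ)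
    (hdisj : ∀ τ ∈ Λ, ∀ ι κ, ι ≠ κ →
        Disjoint (arc (a ι τ) (b ι τ)) (arc (a κ τ) (b κ τ)))
    (hspeed : ∀ τ ∈ Λ, ∀ ι κ, ι ≠ κ →
        (∀ x ∈ ({a ι, b ι} : Set (ℝ → ℝ)), ∀ y ∈ ({a κ, b κ} : Set (ℝ → ℝ)),
            η / 2 ≤ deriv (fun s => y s - x s) τ) ∨
        (∀ x ∈ ({a ι, b ι} : Set (ℝ → ℝ)), ∀ y ∈ ({a κ, b κ} : Set (ℝ → ℝ)),
            deriv (fun s => y s - x s) τ ≤ -(η / 2)))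
    (hsep : ∀ τ ∈ Λ, ∀ n ∈ Finset.Icc 1 M, ∀ ι,
        ε < setDist (arc (a ι τ) (b ι τ))
          ((fun p => p + (n : ℤ) • ω) '' arc (a ι τ) (b ι τ))) :
    volume {τ ∈ Λ | setDist (⋃ ι, arc (a ι τ) (b ι τ))
        (⋃ n ∈ Finset.Icc 1 M,
          (fun p => p + (n : ℤ) • ω) '' ⋃ ι, arc (a ι τ) (b ι τ)) ≤ ε} ≤
        ENNReal.ofReal (8 * 𝒩^2 * M * (δ + ε) / η) ∧
      ∃ C : Fin (2 * 𝒩^2 * M - 1) → Set ℝ, (∀ i, (C i).OrdConnected) ∧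
        {τ ∈ Λ | setDist (⋃ ι, arc (a ι τ) (b ι τ))
          (⋃ n ∈ Finset.Icc 1 M,
            (fun p => p + (n : ℤ) • ω) '' ⋃ ι, arc (a ι τ) (b ι τ)) ≤ ε} =
          ⋃ i, C i := by
  classical
  set Y := {τ ∈ Λ | setDist (⋃ ι, arc (a ι τ) (b ι τ))
        (⋃ n ∈ Finset.Icc 1 M,
          (fun p => p + (n : ℤ) • ω) '' ⋃ ι, arc (a ι τ) (b ι τ)) ≤ ε} with hYdef
  rcases Set.eq_empty_or_nonempty Λ with hΛe | ⟨τ₀, hτ₀⟩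
  · have hYe : Y = ∅ := by
      rw [hYdef, hΛe]; ext τ; simp
    refine ⟨by rw [hYe]; simp, fun _ => ∅, fun _ => Set.ordConnected_empty, by rw [hYe]; simp⟩
  obtain ⟨w, hw⟩ : ∃ w : ℝ, ((w : ℝ) : AddCircle (1:ℝ)) = ω := ⟨ω.out, by simp⟩
  have hab : ∀ ι, ∀ τ ∈ Λ, a ι τ < b ι τ := fun ι τ hτ => by linarith [(hlen ι τ hτ).1]
  -- translation of arcs
  have hsm : ∀ n : ℕ, (fun p : AddCircle (1:ℝ) => p + (n:ℤ) • ω)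
      = fun p => p + (((n:ℝ) * w : ℝ) : AddCircle (1:ℝ)) := by
    intro n
    funext p
    congr 1
    rw [← hw, ← AddCircle.coe_zsmul]
    congr 1
    push_cast [zsmul_eq_mul]
    ring
  have hωn : ∀ (n : ℕ) (x y : ℝ), (fun p : AddCircle (1:ℝ) => p + (n:ℤ) • ω) '' arc x y
      = arc (x + (n:ℝ) * w) (y + (n:ℝ) * w) := by
    intro n x y
    rw [hsm n, image_translate_arc]
  -- ε < 1/2
  have hε2 : ε < 1/2 := by
    have h1M : 1 ∈ Finset.Icc 1 M := Finset.mem_Icc.2 ⟨le_refl 1, hM⟩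
    have hι : (⟨0, h𝒩⟩ : Fin 𝒩) = ⟨0, h𝒩⟩ := rfl
    set ι : Fin 𝒩 := ⟨0, h𝒩⟩
    refine lt_of_lt_of_le (hsep τ₀ hτ₀ 1 h1M ι) (setDist_le_half (arc_nonempty (hab ι τ₀ hτ₀)) ?_)
    rw [hωn]
    exact arc_nonempty (by linarith [hab ι τ₀ hτ₀])
  haveI : Nonempty (Fin 𝒩) := ⟨⟨0, h𝒩⟩⟩
  -- characterization of membership in Y
  have hchar : ∀ τ ∈ Λ, ((setDist (⋃ ι, arc (a ι τ) (b ι τ))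
      (⋃ n ∈ Finset.Icc 1 M, (fun p => p + (n:ℤ) • ω) '' ⋃ ι, arc (a ι τ) (b ι τ)) ≤ ε) ↔
      ∃ ι κ : Fin 𝒩, ∃ n ∈ Finset.Icc 1 M,
        setDist (arc (a ι τ) (b ι τ)) (arc (a κ τ + (n:ℝ)*w) (b κ τ + (n:ℝ)*w)) ≤ ε) := by
    intro τ hτ
    have hA1 : (⋃ ι, arc (a ι τ) (b ι τ))
        = ⋃ ι ∈ (Finset.univ : Finset (Fin 𝒩)), arc (a ι τ) (b ι τ) := by simp
    have hB1 : (⋃ n ∈ Finset.Icc 1 M, (fun p => p + (n:ℤ) • ω) '' ⋃ ι, arc (a ι τ) (b ι τ))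
        = ⋃ p ∈ (Finset.Icc 1 M ×ˢ (Finset.univ : Finset (Fin 𝒩))),
            arc (a p.2 τ + (p.1:ℝ)*w) (b p.2 τ + (p.1:ℝ)*w) := by
      ext q
      simp only [Set.mem_iUnion, exists_prop, Finset.mem_product, Finset.mem_univ, and_true]
      constructor
      · rintro ⟨n, hn, hq⟩
        rw [Set.image_iUnion] at hq
        simp only [Set.mem_iUnion] at hq
        obtain ⟨κ, hκ⟩ := hq
        rw [hωn] at hκ
        exact ⟨(n, κ), hn, hκ⟩
      · rintro ⟨⟨n, κ⟩, hn, hq⟩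
        refine ⟨n, hn, ?_⟩
        rw [Set.image_iUnion]
        simp only [Set.mem_iUnion]
        exact ⟨κ, by rw [hωn]; exact hq⟩
    rw [hB1, hA1, setDist_biUnion_le_iff Finset.univ_nonempty
      ((Finset.nonempty_Icc.2 hM).product Finset.univ_nonempty) _ _
      (fun i _ => arc_nonempty (hab i τ hτ))
      (fun p _ => arc_nonempty (by linarith [hab p.2 τ hτ])) ε]
    constructor
    · rintro ⟨ι, _, ⟨n, κ⟩, hp, hle⟩
      obtain ⟨hn, -⟩ := Finset.mem_product.1 hp
      exact ⟨ι, κ, n, hn, hle⟩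
    · rintro ⟨ι, κ, n, hn, hle⟩
      exact ⟨ι, Finset.mem_univ ι, (n, κ), Finset.mem_product.2 ⟨hn, Finset.mem_univ κ⟩, hle⟩
  have hdiag : ∀ τ ∈ Λ, ∀ n ∈ Finset.Icc 1 M, ∀ ι,
      ¬(setDist (arc (a ι τ) (b ι τ)) (arc (a ι τ + (n:ℝ)*w) (b ι τ + (n:ℝ)*w)) ≤ ε) := by
    intro τ hτ n hn ι
    have := hsep τ hτ n hn ι
    rw [hωn] at this
    exact not_le.2 this
  -- full characterization with integer witness
  have hfwd : ∀ τ ∈ Y, ∃ ι κ : Fin 𝒩, ι ≠ κ ∧ ∃ n ∈ Finset.Icc 1 M, ∃ k : ℤ,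
      a ι τ - (b κ τ + (n:ℝ)*w) - ε ≤ k ∧ (k:ℝ) ≤ b ι τ - (a κ τ + (n:ℝ)*w) + ε := by
    intro τ hτY
    obtain ⟨hτ, hP⟩ := hτY
    obtain ⟨ι, κ, n, hn, hle⟩ := (hchar τ hτ).1 hP
    have hne : ι ≠ κ := by
      rintro rfl
      exact hdiag τ hτ n hn ι hle
    obtain ⟨k, hk⟩ := (setDist_arc_le_iff (hab ι τ hτ) (by linarith [hab κ τ hτ]) hε.le).1 hle
    exact ⟨ι, κ, hne, n, hn, k, hk⟩
  have hbwd : ∀ τ ∈ Λ, ∀ ι κ : Fin 𝒩, ∀ n ∈ Finset.Icc 1 M, ∀ k : ℤ,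
      a ι τ - (b κ τ + (n:ℝ)*w) - ε ≤ k → (k:ℝ) ≤ b ι τ - (a κ τ + (n:ℝ)*w) + ε → τ ∈ Y := by
    intro τ hτ ι κ n hn k hk₁ hk₂
    refine ⟨hτ, (hchar τ hτ).2 ⟨ι, κ, n, hn, ?_⟩⟩
    exact (setDist_arc_le_iff (hab ι τ hτ) (by linarith [hab κ τ hτ]) hε.le).2 ⟨k, hk₁, hk₂⟩
  -- monotonicity dichotomy for each pair
  have hdich : ∀ ι κ : Fin 𝒩, ι ≠ κ →
      (∀ τ₁ ∈ Λ, ∀ τ₂ ∈ Λ, τ₁ ≤ τ₂ →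
        η/2*(τ₂-τ₁) ≤ (a κ τ₂ - b ι τ₂) - (a κ τ₁ - b ι τ₁) ∧
        η/2*(τ₂-τ₁) ≤ (b κ τ₂ - a ι τ₂) - (b κ τ₁ - a ι τ₁)) ∨
      (∀ τ₁ ∈ Λ, ∀ τ₂ ∈ Λ, τ₁ ≤ τ₂ →
        η/2*(τ₂-τ₁) ≤ (a κ τ₁ - b ι τ₁) - (a κ τ₂ - b ι τ₂) ∧
        η/2*(τ₂-τ₁) ≤ (b κ τ₁ - a ι τ₁) - (b κ τ₂ - a ι τ₂)) := by
    intro ι κ hne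
    have hbι : b ι ∈ ({a ι, b ι} : Set (ℝ → ℝ)) := Set.mem_insert_of_mem _ rfl
    have haι : a ι ∈ ({a ι, b ι} : Set (ℝ → ℝ)) := Set.mem_insert _ _
    have hbκ : b κ ∈ ({a κ, b κ} : Set (ℝ → ℝ)) := Set.mem_insert_of_mem _ rfl
    have haκ : a κ ∈ ({a κ, b κ} : Set (ℝ → ℝ)) := Set.mem_insert _ _
    have hUdiff : Differentiable ℝ (fun s => a κ s - b ι s) := (haD κ).sub (hbD ι)
    have hVdiff : Differentiable ℝ (fun s => b κ s - a ι s) := (hbD κ).sub (haD ι)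
    have hUsp : ∀ τ ∈ Λ, η/2 ≤ deriv (fun s => a κ s - b ι s) τ ∨
        deriv (fun s => a κ s - b ι s) τ ≤ -(η/2) := by
      intro τ hτ
      rcases hspeed τ hτ ι κ hne with h | h
      · exact Or.inl (h (b ι) hbι (a κ) haκ)
      · exact Or.inr (h (b ι) hbι (a κ) haκ)
    rcases hspeed τ₀ hτ₀ ι κ hne with h0 | h0
    · left
      have hUall : ∀ τ ∈ Λ, η/2 ≤ deriv (fun s => a κ s - b ι s) τ :=
        sign_propagate hΛ hUdiff hUsp hη hτ₀ (h0 (b ι) hbι (a κ) haκ)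
      have hVall : ∀ τ ∈ Λ, η/2 ≤ deriv (fun s => b κ s - a ι s) τ := by
        intro τ hτ
        rcases hspeed τ hτ ι κ hne with h | h
        · exact h (a ι) haι (b κ) hbκ
        · exfalso
          have h1 := h (b ι) hbι (a κ) haκ
          have h2 := hUall τ hτ
          linarith
      intro τ₁ h₁ τ₂ h₂ hle
      constructor
      · have := slope_ge hΛ hUdiff hUall h₁ h₂ hle
        simpa using this
      · have := slope_ge hΛ hVdiff hVall h₁ h₂ hle
        simpa using this
    · right
      have hUsp' : ∀ τ ∈ Λ, η/2 ≤ deriv (fun s => b ι s - a κ s) τ ∨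
          deriv (fun s => b ι s - a κ s) τ ≤ -(η/2) := by
        intro τ hτ
        have hder : deriv (fun s => b ι s - a κ s) τ = - deriv (fun s => a κ s - b ι s) τ := by
          have : (fun s => b ι s - a κ s) = fun s => -(a κ s - b ι s) := by funext s; ring
          rw [this, deriv.fun_neg]
        rcases hUsp τ hτ with h | h
        · right; rw [hder]; linarith
        · left; rw [hder]; linarith
      have hUdiff' : Differentiable ℝ (fun s => b ι s - a κ s) := (hbD ι).sub (haD κ)
      have hpos0 : η/2 ≤ deriv (fun s => b ι s - a κ s) τ₀ := by
        have hder : deriv (fun s => b ι s - a κ s) τ₀ = - deriv (fun s => a κ s - b ι s) τ₀ := by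
          have : (fun s => b ι s - a κ s) = fun s => -(a κ s - b ι s) := by funext s; ring
          rw [this, deriv.fun_neg]
        rw [hder]
        linarith [h0 (b ι) hbι (a κ) haκ]
      have hUall' : ∀ τ ∈ Λ, η/2 ≤ deriv (fun s => b ι s - a κ s) τ :=
        sign_propagate hΛ hUdiff' hUsp' hη hτ₀ hpos0
      have hUneg : ∀ τ ∈ Λ, deriv (fun s => a κ s - b ι s) τ ≤ -(η/2) := by
        intro τ hτ
        have hder : deriv (fun s => a κ s - b ι s) τ = - deriv (fun s => b ι s - a κ s) τ := by
          have : (fun s => a κ s - b ι s) = fun s => -(b ι s - a κ s) := by funext s; ring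
          rw [this, deriv.fun_neg]
        rw [hder]; linarith [hUall' τ hτ]
      have hVneg : ∀ τ ∈ Λ, deriv (fun s => b κ s - a ι s) τ ≤ -(η/2) := by
        intro τ hτ
        rcases hspeed τ hτ ι κ hne with h | h
        · exfalso
          have h1 := h (b ι) hbι (a κ) haκ
          have h2 := hUneg τ hτ
          linarith
        · exact h (a ι) haι (b κ) hbκ
      intro τ₁ h₁ τ₂ h₂ hle
      have hVdiff : Differentiable ℝ (fun s => b κ s - a ι s) := (hbD κ).sub (haD ι)
      constructor
      · have := slope_le hΛ ((haD κ).sub (hbD ι)) hUneg h₁ h₂ hle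
        simp only [Pi.sub_apply] at this
        linarith
      · have := slope_le hΛ hVdiff hVneg h₁ h₂ hle
        linarith
  -- window for each pair
  have hwin : ∀ ι κ : Fin 𝒩, ι ≠ κ → ∃ m : ℤ, ∀ τ ∈ Λ,
      (m:ℝ) ≤ a κ τ - b ι τ ∧ b κ τ - a ι τ ≤ (m:ℝ) + 1 := by
    intro ι κ hne
    refine window_lemma hΛ (((haD κ).sub (hbD ι)).continuous)
      (((hbD κ).sub (haD ι)).continuous) ?_ ?_ hτ₀
    · intro τ hτ
      have h1 := (hlen ι τ hτ).1
      have h2 := (hlen κ τ hτ).1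
      show a κ τ - b ι τ < b κ τ - a ι τ
      linarith
    · intro τ hτ j hj
      refine disjoint_arc_no_int (hab ι τ hτ) (hab κ τ hτ) (hdisj τ hτ ι κ hne) (-j) ⟨?_, ?_⟩
      · have h2 : ((j:ℝ)) < b κ τ - a ι τ := hj.2
        push_cast
        linarith
      · have h1 : a κ τ - b ι τ < (j:ℝ) := hj.1
        push_cast
        linarith
  set mfun : Fin 𝒩 → Fin 𝒩 → ℤ := fun ι κ =>
    if h : ι ≠ κ then (hwin ι κ h).choose else 0 with hmfundef
  have hmfun : ∀ ι κ (h : ι ≠ κ), ∀ τ ∈ Λ,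
      ((mfun ι κ : ℝ) ≤ a κ τ - b ι τ ∧ b κ τ - a ι τ ≤ (mfun ι κ : ℝ) + 1) := by
    intro ι κ h τ hτ
    rw [hmfundef]
    simp only [dif_pos h]
    exact (hwin ι κ h).choose_spec τ hτ
  set kfun : Fin 𝒩 → Fin 𝒩 → ℕ → ℤ := fun ι κ n =>
    ⌈-((mfun ι κ : ℝ) + 1) - (n:ℝ)*w - ε⌉ with hkfundef
  set S : Fin 𝒩 → Fin 𝒩 → ℕ → ℤ → Set ℝ := fun ι κ n k =>
    {τ | τ ∈ Λ ∧ a ι τ - (b κ τ + (n:ℝ)*w) - ε ≤ (k:ℝ) ∧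
      (k:ℝ) ≤ b ι τ - (a κ τ + (n:ℝ)*w) + ε} with hSdef
  have hSmem : ∀ ι κ n k τ, τ ∈ S ι κ n k ↔ (τ ∈ Λ ∧ a ι τ - (b κ τ + (n:ℝ)*w) - ε ≤ (k:ℝ) ∧
      (k:ℝ) ≤ b ι τ - (a κ τ + (n:ℝ)*w) + ε) := fun ι κ n k τ => Iff.rfl
  -- ord connectedness of the pieces
  have hSord : ∀ (ι κ : Fin 𝒩), ι ≠ κ → ∀ (n : ℕ) (k : ℤ), (S ι κ n k).OrdConnected := by
    intro ι κ hne n k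
    constructor
    intro τ₁ h₁ τ₂ h₂ τ hτ
    have h₁' := (hSmem ι κ n k τ₁).1 h₁
    have h₂' := (hSmem ι κ n k τ₂).1 h₂
    have hτΛ : τ ∈ Λ := hΛ.out h₁'.1 h₂'.1 hτ
    rw [hSmem]
    refine ⟨hτΛ, ?_, ?_⟩
    · rcases hdich ι κ hne with hmono | hmono
      · have hV := (hmono τ₁ h₁'.1 τ hτΛ hτ.1).2
        have h0 : (0:ℝ) ≤ η/2*(τ-τ₁) := mul_nonneg (by linarith) (by linarith [hτ.1])
        linarith [h₁'.2.1]
      · have hV := (hmono τ hτΛ τ₂ h₂'.1 hτ.2).2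
        have h0 : (0:ℝ) ≤ η/2*(τ₂-τ) := mul_nonneg (by linarith) (by linarith [hτ.2])
        linarith [h₂'.2.1]
    · rcases hdich ι κ hne with hmono | hmono
      · have hU := (hmono τ hτΛ τ₂ h₂'.1 hτ.2).1
        have h0 : (0:ℝ) ≤ η/2*(τ₂-τ) := mul_nonneg (by linarith) (by linarith [hτ.2])
        linarith [h₂'.2.2]
      · have hU := (hmono τ₁ h₁'.1 τ hτΛ hτ.1).1
        have h0 : (0:ℝ) ≤ η/2*(τ-τ₁) := mul_nonneg (by linarith) (by linarith [hτ.1])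
        linarith [h₁'.2.2]
  -- diameter bound
  have hSdiam : ∀ (ι κ : Fin 𝒩), ι ≠ κ → ∀ (n : ℕ) (k : ℤ),
      ∀ τ₁ ∈ S ι κ n k, ∀ τ₂ ∈ S ι κ n k, τ₂ - τ₁ ≤ 4*(δ+ε)/η := by
    intro ι κ hne n k τ₁ h₁ τ₂ h₂
    have h₁' := (hSmem ι κ n k τ₁).1 h₁
    have h₂' := (hSmem ι κ n k τ₂).1 h₂
    rcases le_total τ₁ τ₂ with hle | hle
    · have hkey : η/2*(τ₂-τ₁) ≤ 2*δ + 2*ε := by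
        rcases hdich ι κ hne with hmono | hmono
        · have hU := (hmono τ₁ h₁'.1 τ₂ h₂'.1 hle).1
          have hl1 := (hlen ι τ₁ h₁'.1)
          have hl2 := (hlen κ τ₁ h₁'.1)
          linarith [h₂'.2.2, h₁'.2.1]
        · have hU := (hmono τ₁ h₁'.1 τ₂ h₂'.1 hle).1
          have hl1 := (hlen ι τ₂ h₂'.1)
          have hl2 := (hlen κ τ₂ h₂'.1)
          linarith [h₁'.2.2, h₂'.2.1]
      rw [le_div_iff₀ hη]
      linarith
    · have : (0:ℝ) ≤ 4*(δ+ε)/η := by positivity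
      linarith
  -- volume bound for each piece
  have hSvol : ∀ (ι κ : Fin 𝒩), ι ≠ κ → ∀ (n : ℕ) (k : ℤ),
      volume (S ι κ n k) ≤ ENNReal.ofReal (4*(δ+ε)/η) := by
    intro ι κ hne n k
    rcases Set.eq_empty_or_nonempty (S ι κ n k) with he | ⟨t₀, ht₀⟩
    · rw [he]; simp
    have bddB : BddBelow (S ι κ n k) := ⟨0, fun τ h => (hΛ01 ((hSmem ι κ n k τ).1 h).1).1⟩
    have bddA : BddAbove (S ι κ n k) := ⟨1, fun τ h => (hΛ01 ((hSmem ι κ n k τ).1 h).1).2⟩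
    have hsub : S ι κ n k ⊆ Set.Icc (sInf (S ι κ n k)) (sSup (S ι κ n k)) :=
      fun τ h => ⟨csInf_le bddB h, le_csSup bddA h⟩
    calc volume (S ι κ n k) ≤ volume (Set.Icc (sInf (S ι κ n k)) (sSup (S ι κ n k))) :=
          measure_mono hsub
    _ = ENNReal.ofReal (sSup (S ι κ n k) - sInf (S ι κ n k)) := Real.volume_Icc
    _ ≤ ENNReal.ofReal (4*(δ+ε)/η) := by
        apply ENNReal.ofReal_le_ofReal
        have h1 : sSup (S ι κ n k) ≤ sInf (S ι κ n k) + 4*(δ+ε)/η := by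
          apply csSup_le ⟨t₀, ht₀⟩
          intro τ₂ h₂
          have h2 : τ₂ - 4*(δ+ε)/η ≤ sInf (S ι κ n k) := by
            apply le_csInf ⟨t₀, ht₀⟩
            intro τ₁ h₁
            linarith [hSdiam ι κ hne n k τ₁ h₁ τ₂ h₂]
          linarith
        linarith
  -- range of realized integers
  have hkrange : ∀ (ι κ : Fin 𝒩) (hne : ι ≠ κ) (n : ℕ) (k : ℤ), ∀ τ ∈ S ι κ n k,
      k = kfun ι κ n ∨ k = kfun ι κ n + 1 := by
    intro ι κ hne n k τ h
    have h' := (hSmem ι κ n k τ).1 h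
    obtain ⟨hm1, hm2⟩ := hmfun ι κ hne τ h'.1
    set L : ℝ := -((mfun ι κ : ℝ) + 1) - (n:ℝ)*w - ε with hLdef
    have hk1 : kfun ι κ n ≤ k := by
      rw [hkfundef]
      simp only
      rw [Int.ceil_le]
      have := h'.2.1
      push_cast
      linarith
    have hk2 : k ≤ kfun ι κ n + 1 := by
      have hceil : L ≤ (kfun ι κ n : ℝ) := by rw [hkfundef]; exact Int.le_ceil L
      have hub : (k:ℝ) < (kfun ι κ n : ℝ) + 2 := by
        have := h'.2.2
        have hL : (k:ℝ) ≤ L + 1 + 2*ε := by rw [hLdef]; push_cast; linarith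
        linarith
      have : k < kfun ι κ n + 2 := by exact_mod_cast hub
      omega
    omega
  -- the index type
  set S' : ({p : Fin 𝒩 × Fin 𝒩 // p.1 ≠ p.2} × Fin M × Bool) → Set ℝ := fun x =>
    S x.1.1.1 x.1.1.2 (x.2.1.1 + 1)
      (kfun x.1.1.1 x.1.1.2 (x.2.1.1 + 1) + (if x.2.2 then 1 else 0)) with hS'def
  have hcover : Y = ⋃ x, S' x := by
    ext τ
    simp only [Set.mem_iUnion]
    constructor
    · intro hτY
      obtain ⟨ι, κ, hne, n, hn, k, hk₁, hk₂⟩ := hfwd τ hτY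
      obtain ⟨hn1, hn2⟩ := Finset.mem_Icc.1 hn
      have hτΛ : τ ∈ Y → τ ∈ Λ := fun h => h.1
      have hτS : τ ∈ S ι κ n k := (hSmem ι κ n k τ).2 ⟨hτY.1, hk₁, hk₂⟩
      have hfin : n - 1 < M := by omega
      have hco : (n - 1) + 1 = n := by omega
      rcases hkrange ι κ hne n k τ hτS with hk | hk
      · refine ⟨⟨⟨(ι, κ), hne⟩, ⟨n-1, hfin⟩, false⟩, ?_⟩
        show τ ∈ S ι κ ((n-1)+1) (kfun ι κ ((n-1)+1) + (if false then 1 else 0))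
        rw [hco]
        simpa [← hk] using hτS
      · refine ⟨⟨⟨(ι, κ), hne⟩, ⟨n-1, hfin⟩, true⟩, ?_⟩
        show τ ∈ S ι κ ((n-1)+1) (kfun ι κ ((n-1)+1) + (if true then 1 else 0))
        rw [hco]
        simpa [← hk] using hτS
    · rintro ⟨⟨⟨⟨ι, κ⟩, hne⟩, nn, bb⟩, hτS⟩
      have h' := (hSmem _ _ _ _ τ).1 hτS
      refine hbwd τ h'.1 ι κ (nn.1+1) (Finset.mem_Icc.2 ⟨by omega, by omega⟩) _ h'.2.1 h'.2.2
  -- cardinality computations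
  have hdiagcard : Fintype.card {p : Fin 𝒩 × Fin 𝒩 // p.1 = p.2} = 𝒩 := by
    have ed : {p : Fin 𝒩 × Fin 𝒩 // p.1 = p.2} ≃ Fin 𝒩 :=
      ⟨fun x => x.1.1, fun ι => ⟨(ι, ι), rfl⟩,
        fun ⟨⟨i, j⟩, h⟩ => by cases h; rfl, fun ι => rfl⟩
    rw [Fintype.card_congr ed, Fintype.card_fin]
  have hsubcard : Fintype.card {p : Fin 𝒩 × Fin 𝒩 // p.1 ≠ p.2} = 𝒩*𝒩 - 𝒩 := by
    have := Fintype.card_subtype_compl (fun p : Fin 𝒩 × Fin 𝒩 => p.1 = p.2)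
    simp only [hdiagcard, Fintype.card_prod, Fintype.card_fin] at this
    exact this
  have hcard : Fintype.card ({p : Fin 𝒩 × Fin 𝒩 // p.1 ≠ p.2} × Fin M × Bool)
      = (𝒩*𝒩 - 𝒩) * (M * 2) := by
    rw [Fintype.card_prod, Fintype.card_prod, Fintype.card_fin, Fintype.card_bool, hsubcard]
  have e5 : 𝒩*M ≤ 𝒩*𝒩*M :=
    Nat.mul_le_mul_right M (Nat.le_mul_of_pos_left 𝒩 h𝒩)
  have hcardle : Fintype.card ({p : Fin 𝒩 × Fin 𝒩 // p.1 ≠ p.2} × Fin M × Bool)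
      ≤ 2 * 𝒩^2 * M - 1 := by
    rw [hcard]
    have e1 : (𝒩*𝒩-𝒩)*(M*2) = 𝒩*𝒩*(M*2) - 𝒩*(M*2) := Nat.sub_mul _ _ _
    have e2 : 𝒩*𝒩*(M*2) = 2*(𝒩*𝒩*M) := by ring
    have e3 : 𝒩*(M*2) = 2*(𝒩*M) := by ring
    have e4 : 2*𝒩^2*M = 2*(𝒩*𝒩*M) := by ring
    have h1 : 1 ≤ 𝒩*M := by
      calc 1 = 1*1 := rfl
      _ ≤ 𝒩*M := Nat.mul_le_mul h𝒩 hM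
    omega
  obtain ⟨e⟩ : Nonempty (({p : Fin 𝒩 × Fin 𝒩 // p.1 ≠ p.2} × Fin M × Bool) ↪
      Fin (2 * 𝒩^2 * M - 1)) := by
    apply Function.Embedding.nonempty_of_card_le
    rw [Fintype.card_fin]
    exact hcardle
  set C : Fin (2 * 𝒩^2 * M - 1) → Set ℝ := fun i => ⋃ (x) (_ : e x = i), S' x with hCdef
  have hCord : ∀ i, (C i).OrdConnected := by
    intro i
    by_cases hex : ∃ x, e x = i
    · obtain ⟨x₀, hx₀⟩ := hex
      have hCi : C i = S' x₀ := by
        ext τ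
        simp only [hCdef, Set.mem_iUnion]
        constructor
        · rintro ⟨x, hx, hm⟩
          rwa [e.injective (hx.trans hx₀.symm)] at hm
        · intro hm
          exact ⟨x₀, hx₀, hm⟩
      rw [hCi, hS'def]
      exact hSord _ _ x₀.1.2 _ _
    · have hCi : C i = ∅ := by
        ext τ
        simp only [hCdef, Set.mem_iUnion, Set.mem_empty_iff_false, iff_false, not_exists]
        intro x hx
        exact absurd ⟨x, hx⟩ hex
      rw [hCi]
      exact Set.ordConnected_empty
  have hunion : ⋃ i, C i = ⋃ x, S' x := by
    ext τ
    simp only [hCdef, Set.mem_iUnion]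
    constructor
    · rintro ⟨i, x, hx, hm⟩
      exact ⟨x, hm⟩
    · rintro ⟨x, hm⟩
      exact ⟨e x, x, rfl, hm⟩
  have hd0 : (0:ℝ) ≤ 4*(δ+ε)/η := by positivity
  refine ⟨?_, C, hCord, by rw [hcover, hunion]⟩
  calc volume Y = volume (⋃ x, S' x) := by rw [hcover]
  _ ≤ ∑ x, volume (S' x) := measure_iUnion_fintype_le _ _
  _ ≤ ∑ _x : ({p : Fin 𝒩 × Fin 𝒩 // p.1 ≠ p.2} × Fin M × Bool),
        ENNReal.ofReal (4*(δ+ε)/η) :=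
      Finset.sum_le_sum (fun x _ => hSvol _ _ x.1.2 _ _)
  _ = (Fintype.card ({p : Fin 𝒩 × Fin 𝒩 // p.1 ≠ p.2} × Fin M × Bool) : ENNReal) *
        ENNReal.ofReal (4*(δ+ε)/η) := by
      rw [Finset.sum_const, Finset.card_univ, nsmul_eq_mul]
  _ ≤ ENNReal.ofReal (8 * 𝒩^2 * M * (δ + ε) / η) := by
      rw [← ENNReal.ofReal_natCast, ← ENNReal.ofReal_mul (by positivity)]
      apply ENNReal.ofReal_le_ofReal
      have hcle : Fintype.card ({p : Fin 𝒩 × Fin 𝒩 // p.1 ≠ p.2} × Fin M × Bool)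
          ≤ 2*𝒩^2*M := by
        rw [hcard]
        calc (𝒩*𝒩-𝒩)*(M*2) ≤ (𝒩*𝒩)*(M*2) := Nat.mul_le_mul_right _ (Nat.sub_le _ _)
        _ = 2*𝒩^2*M := by ring
      have hcleR : (Fintype.card ({p : Fin 𝒩 × Fin 𝒩 // p.1 ≠ p.2} × Fin M × Bool) : ℝ)
          ≤ ((2*𝒩^2*M : ℕ) : ℝ) := Nat.cast_le.2 hcle
      calc (Fintype.card ({p : Fin 𝒩 × Fin 𝒩 // p.1 ≠ p.2} × Fin M × Bool) : ℝ) *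
            (4*(δ+ε)/η) ≤ ((2*𝒩^2*M : ℕ) : ℝ) * (4*(δ+ε)/η) :=
          mul_le_mul_of_nonneg_right hcleR hd0
      _ = 8 * 𝒩^2 * M * (δ + ε) / η := by push_cast; ring
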